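/- Let n ≥ 2, let u, v be tree representations on {1,…,n}, and let u′ be obtained from u by a single HOP. Then Sim(u′,v) ≤ Sim(u,v) + 1. -/

import Mathlib

/-- 0-indexed position of the first occurrence of `x` in `v`. -/
def firstOcc (v : List ℕ) (x : ℕ) : ℕ := v.idxOf x

/-- 0-indexed position of the second (= last, when `x` occurs exactly twice)
occurrence of `x` in `v`. -/
def secondOcc (v : List ℕ) (x : ℕ) : ℕ := v.length - 1 - v.reverse.idxOf x

/-- `v` is a tree representation on `{1,…,n}`: it has length `2n`, entries in
`{1,…,n}`, every `i ∈ {1,…,n}` occurs exactly twice, the first entry is `1`,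
for every `i ∈ {2,…,n}` the first occurrence of `i` appears strictly before the
second occurrence of `i-1`, and the second occurrence of `i` appears strictly
after the second occurrence of `i-1`. -/
def IsTreeRep (n : ℕ) (v : List ℕ) : Prop :=
  v.length = 2 * n ∧
  (∀ x ∈ v, 1 ≤ x ∧ x ≤ n) ∧
  (∀ i, 1 ≤ i → i ≤ n → v.count i = 2) ∧
  v.getD 0 0 = 1 ∧
  (∀ i, 2 ≤ i → i ≤ n → firstOcc v i < secondOcc v (i - 1)) ∧
  (∀ i, 2 ≤ i → i ≤ n → secondOcc v (i - 1) < secondOcc v i)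

/-- A single HOP: for some `i ∈ {2,…,n}`, remove the first occurrence of `i`
from `v` and reinsert it at a (0-indexed) position `k` strictly after the first
entry (`1 ≤ k`) and weakly before the (resulting position of the) second
occurrence of `i-1`. -/
def IsHop (n : ℕ) (v v' : List ℕ) : Prop :=
  ∃ i k, 2 ≤ i ∧ i ≤ n ∧ 1 ≤ k ∧ k ≤ secondOcc (v.erase i) (i - 1) ∧
    v' = (v.erase i).insertIdx k i

/-- Start index (0-indexed) of the block `Bᵢ(v)`. -/
def blockStart (v : List ℕ) (i : ℕ) : ℕ := if i = 1 then 0 else secondOcc v (i - 1) + 1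

/-- The block `Bᵢ(v)` of entries strictly between the second occurrences of
`i-1` and `i` (for `i = 1`, the block of entries before the second occurrence of `1`). -/
def block (v : List ℕ) (i : ℕ) : List ℕ := (v.take (secondOcc v i)).drop (blockStart v i)

/-- Length of a longest common subsequence of `a` and `b`. -/
noncomputable def lcsLen (a b : List ℕ) : ℕ :=
  sSup {m | ∃ w : List ℕ, w.length = m ∧ w.Sublist a ∧ w.Sublist b}

/-- The HOP similarity of two tree representations on `{1,…,n}`:
`Sim(u,v) = Σ_{i=1}^{n-1} |LCS(Bᵢ(u), Bᵢ(v))|`. -/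
noncomputable def sim (n : ℕ) (u v : List ℕ) : ℕ :=
  ∑ i ∈ Finset.Icc 1 (n - 1), lcsLen (block u i) (block v i)

open List

/-! ### Auxiliary lemmas -/

section Aux

lemma lcs_set_nonempty (a b : List ℕ) :
    Set.Nonempty {m | ∃ w : List ℕ, w.length = m ∧ w.Sublist a ∧ w.Sublist b} :=
  ⟨0, [], rfl, nil_sublist _, nil_sublist _⟩

lemma lcs_set_bdd (a b : List ℕ) :
    BddAbove {m | ∃ w : List ℕ, w.length = m ∧ w.Sublist a ∧ w.Sublist b} := by
  refine ⟨a.length, ?_⟩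
  rintro m ⟨w, rfl, ha, _⟩
  exact ha.length_le

lemma le_lcsLen {w a b : List ℕ} (ha : w.Sublist a) (hb : w.Sublist b) :
    w.length ≤ lcsLen a b :=
  le_csSup (lcs_set_bdd a b) ⟨w, rfl, ha, hb⟩

lemma lcsLen_le {a b : List ℕ} {c : ℕ}
    (h : ∀ w : List ℕ, w.Sublist a → w.Sublist b → w.length ≤ c) : lcsLen a b ≤ c :=
  csSup_le (lcs_set_nonempty a b) (by rintro m ⟨w, rfl, ha, hb⟩; exact h w ha hb)

lemma lcsLen_mono {a a' b : List ℕ} (h : a'.Sublist a) : lcsLen a' b ≤ lcsLen a b :=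
  lcsLen_le fun w hw hb => le_lcsLen (hw.trans h) hb

lemma insertIdx_eq_take_cons_drop (l : List ℕ) (k : ℕ) (x : ℕ) (h : k ≤ l.length) :
    l.insertIdx k x = l.take k ++ x :: l.drop k := by
  induction l generalizing k with
  | nil => simp_all
  | cons a t ih =>
    cases k with
    | zero => simp
    | succ k => simp only [insertIdx_succ_cons, take_succ_cons, drop_succ_cons, cons_append,
        cons.injEq, true_and]; exact ih k (by simpa using h)

lemma lcsLen_insertIdx_le (a b : List ℕ) (k x : ℕ) :
    lcsLen (a.insertIdx k x) b ≤ lcsLen a b + 1 := by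
  rcases le_or_gt k a.length with hk | hk
  · refine lcsLen_le fun w hw hb => ?_
    rw [insertIdx_eq_take_cons_drop a k x hk] at hw
    rcases sublist_append_iff.1 hw with ⟨w1, w2, rfl, h1, h2⟩
    rcases sublist_cons_iff.1 h2 with h2' | ⟨r, rfl, hr⟩
    · have hs : (w1 ++ w2).Sublist a := by
        have := h1.append h2'
        simpa [take_append_drop] using this
      exact le_trans (le_lcsLen hs hb) (Nat.le_succ _)
    · have hs : (w1 ++ r).Sublist a := by
        have := h1.append hr
        simpa [take_append_drop] using this
      have hsb : (w1 ++ r).Sublist b :=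
        ((Sublist.cons _ (Sublist.refl r)).append_left w1).trans hb
      have := le_lcsLen hs hsb
      simp only [length_append, length_cons] at this ⊢
      omega
  · rw [insertIdx_of_length_lt hk]
    exact Nat.le_succ _

lemma getElem_congr' (l : List ℕ) {a b : ℕ} (h : a = b) (hb : b < l.length) :
    l[a]'(by omega) = l[b] := by subst h; rfl

lemma getElem_congr'' (l : List ℕ) {a b : ℕ} (h : a = b) (ha : a < l.length)
    (hb : b < l.length) : l[a] = l[b] := by subst h; rfl

lemma getElem_ne_of_lt_indexOf {l : List ℕ} {x m : ℕ} (h : m < l.idxOf x)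
    (hm : m < l.length) : l[m] ≠ x := by
  have := List.not_of_lt_findIdx (p := (· == x)) (xs := l) h
  simpa using this

lemma secondOcc_lt_length {l : List ℕ} {x : ℕ} (h : x ∈ l) : secondOcc l x < l.length := by
  have h0 : 0 < l.length := length_pos_iff.2 (ne_nil_of_mem h)
  unfold secondOcc; omega

lemma getElem_secondOcc {l : List ℕ} {x : ℕ} (h : x ∈ l) :
    l[secondOcc l x]'(secondOcc_lt_length h) = x := by
  have hr : x ∈ l.reverse := mem_reverse.2 h
  have hlt : l.reverse.idxOf x < l.reverse.length := idxOf_lt_length_iff.2 hr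
  have := getElem_idxOf hlt
  rw [getElem_reverse] at this
  simp only [length_reverse] at this hlt
  exact this

lemma getElem_ne_of_secondOcc_lt {l : List ℕ} {x m : ℕ} (h : x ∈ l)
    (hm : m < l.length) (h2 : secondOcc l x < m) : l[m] ≠ x := by
  have hr : x ∈ l.reverse := mem_reverse.2 h
  have hlt : l.reverse.idxOf x < l.reverse.length := idxOf_lt_length_iff.2 hr
  simp only [length_reverse] at hlt
  have hidx : l.length - 1 - m < l.reverse.idxOf x := by unfold secondOcc at h2; omega
  have hm' : l.length - 1 - m < l.reverse.length := by simp; omega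
  have := getElem_ne_of_lt_indexOf hidx hm'
  rw [getElem_reverse] at this
  rw [getElem_congr' l (show l.length - 1 - (l.length - 1 - m) = m by omega) hm] at this
  exact this

lemma secondOcc_eq_of {l : List ℕ} {x q : ℕ} (hq : q < l.length)
    (hx : l[q] = x)
    (hafter : ∀ m (hm : m < l.length), q < m → l[m] ≠ x) : secondOcc l x = q := by
  have hmem : x ∈ l := hx ▸ getElem_mem _
  rcases lt_trichotomy (secondOcc l x) q with h | h | h
  · exact absurd hx (getElem_ne_of_secondOcc_lt hmem hq h)
  · exact h
  · exact absurd (getElem_secondOcc hmem) (hafter _ (secondOcc_lt_length hmem) h)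

lemma secondOcc_eraseIdx {l : List ℕ} {x p : ℕ} (hp : p < l.length)
    (hx : x ∈ l.eraseIdx p) (hne : p ≠ secondOcc l x) :
    secondOcc (l.eraseIdx p) x =
      if p < secondOcc l x then secondOcc l x - 1 else secondOcc l x := by
  have hxl : x ∈ l := (eraseIdx_sublist l p).mem hx
  set q := secondOcc l x with hq
  have hql : q < l.length := secondOcc_lt_length hxl
  have hgq : l[q] = x := getElem_secondOcc hxl
  have hlen : (l.eraseIdx p).length = l.length - 1 := by rw [length_eraseIdx]; simp [hp]
  by_cases hpq : p < q
  · rw [if_pos hpq]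
    refine secondOcc_eq_of (by omega) ?_ ?_
    · rw [getElem_eraseIdx]
      rw [dif_neg (by omega)]
      have : q - 1 + 1 = q := by omega
      simp_rw [this]; exact hgq
    · intro m hm hqm
      rw [getElem_eraseIdx]
      rw [dif_neg (by omega)]
      exact getElem_ne_of_secondOcc_lt hxl (by omega) (by omega)
  · rw [if_neg hpq]
    have hqp : q < p := by omega
    refine secondOcc_eq_of (by omega) ?_ ?_
    · rw [getElem_eraseIdx, dif_pos (by omega)]; exact hgq
    · intro m hm hqm
      rw [getElem_eraseIdx]
      split
      · exact getElem_ne_of_secondOcc_lt hxl (by omega) (by omega)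
      · exact getElem_ne_of_secondOcc_lt hxl (by omega) (by omega)

lemma getElem_insertIdx'' (l : List ℕ) (k y m : ℕ) (hk : k ≤ l.length)
    (hm : m < l.length + 1) :
    (l.insertIdx k y)[m]'(by rw [length_insertIdx_of_le_length hk _]; omega) =
      if h1 : m < k then l[m]'(by omega)
      else if h2 : m = k then y
      else l[m-1]'(by omega) := by
  split_ifs with h1 h2
  · exact getElem_insertIdx_of_lt h1 _
  · subst h2; exact getElem_insertIdx_self _
  · have hm' : k + (m - k - 1) < l.length := by omega
    have := getElem_insertIdx_of_gt (l := l) (x := y) (i := k) (j := k + (m - k - 1) + 1)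
      (by omega) (by rw [length_insertIdx_of_le_length hk _]; omega)
    simp only [Nat.add_sub_cancel] at this
    have e1 : k + (m - k - 1) + 1 = m := by omega
    have e2 : k + (m - k - 1) = m - 1 := by omega
    rw [getElem_congr' _ e1 (by rw [length_insertIdx_of_le_length hk _]; omega),
        getElem_congr' _ e2 (by omega)] at this
    exact this

lemma secondOcc_insertIdx {l : List ℕ} {x y k : ℕ} (hk : k ≤ l.length)
    (hx : x ∈ l) (hcase : y ≠ x ∨ k ≤ secondOcc l x) :
    secondOcc (l.insertIdx k y) x =
      if k ≤ secondOcc l x then secondOcc l x + 1 else secondOcc l x := by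
  set q := secondOcc l x with hq
  have hql : q < l.length := secondOcc_lt_length hx
  have hgq : l[q] = x := getElem_secondOcc hx
  have hlen : (l.insertIdx k y).length = l.length + 1 := length_insertIdx_of_le_length hk _
  by_cases hkq : k ≤ q
  · rw [if_pos hkq]
    refine secondOcc_eq_of (by omega) ?_ ?_
    · rw [getElem_insertIdx'' l k y (q+1) hk (by omega), dif_neg (by omega), dif_neg (by omega)]
      simpa using hgq
    · intro m hm hqm
      rw [getElem_insertIdx'' l k y m hk (by omega), dif_neg (by omega), dif_neg (by omega)]
      exact getElem_ne_of_secondOcc_lt hx (by omega) (by omega)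
  · rw [if_neg hkq]
    have hy : y ≠ x := by rcases hcase with h | h; exact h; omega
    refine secondOcc_eq_of (by omega) ?_ ?_
    · rw [getElem_insertIdx'' l k y q hk (by omega), dif_pos (by omega)]
      exact hgq
    · intro m hm hqm
      rw [getElem_insertIdx'' l k y m hk (by omega)]
      split
      · exact getElem_ne_of_secondOcc_lt hx (by omega) (by omega)
      · split
        · exact hy
        · exact getElem_ne_of_secondOcc_lt hx (by omega) (by omega)

lemma take_eraseIdx_of_le {l : List ℕ} {p t : ℕ} (h : t ≤ p) (hp : p < l.length) :
    (l.eraseIdx p).take t = l.take t := by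
  have hlen : (l.eraseIdx p).length = l.length - 1 := by rw [length_eraseIdx]; simp [hp]
  apply List.ext_getElem
  · simp [hlen]; omega
  · intro m h1 h2
    rw [getElem_take, getElem_take, getElem_eraseIdx, dif_pos (by simp at h1; omega)]

lemma drop_eraseIdx_of_ge {l : List ℕ} {p s : ℕ} (h : p ≤ s) (hp : p < l.length) :
    (l.eraseIdx p).drop s = l.drop (s + 1) := by
  have hlen : (l.eraseIdx p).length = l.length - 1 := by rw [length_eraseIdx]; simp [hp]
  apply List.ext_getElem
  · simp [hlen]; omega
  · intro m h1 h2
    rw [getElem_drop, getElem_drop, getElem_eraseIdx, dif_neg (by omega)]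
    congr 1
    omega

lemma slice_eraseIdx_inside {l : List ℕ} {p s t : ℕ} (hs : s ≤ p) (hpt : p < t)
    (ht : t ≤ l.length) :
    ((l.eraseIdx p).take (t - 1)).drop s = ((l.take t).drop s).eraseIdx (p - s) := by
  have hp : p < l.length := by omega
  have hlen : (l.eraseIdx p).length = l.length - 1 := by simp [length_eraseIdx, hp]
  have hL : ((l.take t).drop s).length = t - s := by simp; omega
  have hL2 : (((l.take t).drop s).eraseIdx (p - s)).length = t - s - 1 := by
    rw [length_eraseIdx, hL, if_pos (by omega)]
  apply List.ext_getElem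
  · rw [hL2]; simp [hlen]; omega
  · intro m h1 h2
    have hm : m < t - 1 - s := by rw [hL2] at h2; omega
    rw [getElem_drop, getElem_take, getElem_eraseIdx, getElem_eraseIdx]
    by_cases hc : m < p - s
    · rw [dif_pos (show s + m < p by omega), dif_pos hc, getElem_drop, getElem_take]
    · rw [dif_neg (show ¬ s + m < p by omega), dif_neg hc, getElem_drop, getElem_take]
      exact getElem_congr'' l (by omega) (by omega) (by omega)

lemma take_insertIdx_of_le {l : List ℕ} {k t : ℕ} (h : t ≤ k) (hk : k ≤ l.length) (y : ℕ) :
    ((l.insertIdx k y).take t) = l.take t := by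
  have hlen : (l.insertIdx k y).length = l.length + 1 := length_insertIdx_of_le_length hk _
  apply List.ext_getElem
  · simp [hlen]; omega
  · intro m h1 h2
    rw [getElem_take, getElem_take, getElem_insertIdx'' l k y m hk (by simp at h2; omega),
      dif_pos (by simp at h1; omega)]

lemma drop_insertIdx_of_ge {l : List ℕ} {k s : ℕ} (h : k ≤ s) (hk : k ≤ l.length)
    (hs : s ≤ l.length) (y : ℕ) :
    (l.insertIdx k y).drop (s + 1) = l.drop s := by
  have hlen : (l.insertIdx k y).length = l.length + 1 := length_insertIdx_of_le_length hk _
  apply List.ext_getElem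
  · simp [hlen]
  · intro m h1 h2
    rw [getElem_drop, getElem_drop,
      getElem_insertIdx'' l k y (s + 1 + m) hk (by simp [hlen] at h1; omega),
      dif_neg (by omega), dif_neg (by omega)]
    congr 1
    omega

lemma slice_insertIdx_inside {l : List ℕ} {k s t : ℕ} (hs : s ≤ k) (hkt : k ≤ t)
    (ht : t ≤ l.length) (y : ℕ) :
    ((l.insertIdx k y).take (t + 1)).drop s = ((l.take t).drop s).insertIdx (k - s) y := by
  have hlen : (l.insertIdx k y).length = l.length + 1 := length_insertIdx_of_le_length (by omega) _
  have hL : ((l.take t).drop s).length = t - s := by simp; omega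
  have hL2 : (((l.take t).drop s).insertIdx (k - s) y).length = t - s + 1 :=
    by rw [length_insertIdx_of_le_length (by omega) _, hL]
  apply List.ext_getElem
  · rw [hL2]; simp [hlen]; omega
  · intro m h1 h2
    have hm : m < t + 1 - s := by rw [hL2] at h2; omega
    rw [getElem_drop, getElem_take,
      getElem_insertIdx'' l k y (s + m) (by omega) (by omega),
      getElem_insertIdx'' ((l.take t).drop s) (k - s) y m (by omega) (by rw [hL]; omega)]
    by_cases hc1 : m < k - s
    · rw [dif_pos (show s + m < k by omega), dif_pos hc1, getElem_drop, getElem_take]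
    · by_cases hc2 : m = k - s
      · rw [dif_neg (show ¬ s + m < k by omega), dif_pos (show s + m = k by omega),
          dif_neg hc1, dif_pos hc2]
      · rw [dif_neg (show ¬ s + m < k by omega), dif_neg (show ¬ s + m = k by omega),
          dif_neg hc1, dif_neg hc2, getElem_drop, getElem_take]
        exact getElem_congr'' l (by omega) (by omega) (by omega)

end Aux

/-- For `n ≥ 2`, tree representations `u, v` on `{1,…,n}`, and `u'` obtained
from `u` by a single HOP, `Sim(u',v) ≤ Sim(u,v) + 1`. -/
theorem stmt11 (n : ℕ) (hn : 2 ≤ n) (u v u' : List ℕ)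
    (hu : IsTreeRep n u) (hv : IsTreeRep n v) (h : IsHop n u u') :
    sim n u' v ≤ sim n u v + 1 := by
  obtain ⟨i, k, hi2, hin, hk1, hk2, hu'⟩ := h
  obtain ⟨hlen, hentry, hcount, hfirst, h5, h6⟩ := hu
  have hlen4 : 4 ≤ u.length := by omega
  set p := u.idxOf i with hp_def
  have memu : ∀ j, 1 ≤ j → j ≤ n → j ∈ u := fun j h1 h2 =>
    count_pos_iff.1 (by rw [hcount j h1 h2]; omega)
  have hiu : i ∈ u := memu i (by omega) hin
  have hp : p < u.length := idxOf_lt_length_iff.2 hiu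
  have herase : u.erase i = u.eraseIdx p := (eraseIdx_idxOf_eq_erase i u).symm
  set e := u.eraseIdx p with he_def
  have hel : e.length = u.length - 1 := by rw [he_def, length_eraseIdx]; simp [hp]
  have meme : ∀ j, 1 ≤ j → j ≤ n → j ∈ e := by
    intro j h1 h2
    rw [← herase, ← count_pos_iff]
    by_cases hj : j = i
    · subst hj; rw [count_erase_self, hcount j h1 h2]; omega
    · rw [count_erase_of_ne hj, hcount j h1 h2]; omega
  have hsu : ∀ j, 1 ≤ j → j ≤ n → secondOcc u j < u.length := fun j h1 h2 =>
    secondOcc_lt_length (memu j h1 h2)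
  -- p is not a second-occurrence position
  have hpi1 : p < secondOcc u (i - 1) := h5 i hi2 hin
  have hsii : secondOcc u (i - 1) < secondOcc u i := h6 i hi2 hin
  have hpne : ∀ j, 1 ≤ j → j ≤ n → p ≠ secondOcc u j := by
    intro j h1 h2 heq
    have hui : u[p] = i := getElem_idxOf hp
    have huj : u[secondOcc u j]'(hsu j h1 h2) = j := getElem_secondOcc (memu j h1 h2)
    have hij : i = j := by
      rw [← hui, ← huj]; exact getElem_congr'' u heq hp (hsu j h1 h2)
    subst hij
    omega
  -- monotonicity of secondOcc u
  have hmono : ∀ b, b ≤ n → ∀ a, 1 ≤ a → a ≤ b → secondOcc u a ≤ secondOcc u b := by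
    intro b
    induction b with
    | zero => intro _ a h1 h2; exact absurd h2 (by omega)
    | succ b ih =>
      intro hbn a h1 h2
      rcases Nat.eq_or_lt_of_le h2 with heq | hlt
      · rw [heq]
      · have hstep := h6 (b + 1) (by omega) hbn
        simp only [Nat.add_sub_cancel] at hstep
        exact le_trans (ih (by omega) a h1 (by omega)) (le_of_lt hstep)
  have hsmono : ∀ a b, 1 ≤ a → a < b → b ≤ n → secondOcc u a < secondOcc u b := by
    intro a b h1 h2 h3
    have hstep := h6 b (by omega) h3
    exact lt_of_le_of_lt (hmono (b - 1) (by omega) a h1 (by omega)) hstep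
  -- secondOcc of e
  have hse : ∀ j, 1 ≤ j → j ≤ n → secondOcc e j =
      if p < secondOcc u j then secondOcc u j - 1 else secondOcc u j := by
    intro j h1 h2
    exact secondOcc_eraseIdx hp (meme j h1 h2) (hpne j h1 h2)
  have hsei1 : secondOcc e (i - 1) = secondOcc u (i - 1) - 1 := by
    rw [hse (i - 1) (by omega) (by omega), if_pos hpi1]
  have hk2' : k ≤ secondOcc u (i - 1) - 1 := by
    rw [herase, hsei1] at hk2; exact hk2
  have hkel : k < e.length := by
    have := hsu (i - 1) (by omega) (by omega)
    omega
  have hsemono : ∀ a b, 1 ≤ a → a < b → b ≤ n → secondOcc e a < secondOcc e b := by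
    intro a b h1 h2 h3
    rw [hse a h1 (by omega), hse b (by omega) h3]
    have hab := hsmono a b h1 h2 h3
    have hpa := hpne a h1 (by omega)
    have hpb := hpne b (by omega) h3
    split_ifs <;> omega
  have hsel : ∀ j, 1 ≤ j → j ≤ n → secondOcc e j < e.length := fun j h1 h2 =>
    secondOcc_lt_length (meme j h1 h2)
  -- secondOcc of u' = e.insertIdx k i
  have hs' : ∀ j, 1 ≤ j → j ≤ n → secondOcc (e.insertIdx k i) j =
      if k ≤ secondOcc e j then secondOcc e j + 1 else secondOcc e j := by
    intro j h1 h2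
    apply secondOcc_insertIdx (le_of_lt hkel) (meme j h1 h2)
    by_cases hj : i = j
    · right
      subst hj
      have := hsemono (i - 1) i (by omega) (by omega) hin
      omega
    · left; exact hj
  -- Step 1: blocks of e vs blocks of u
  have keyA : ∀ j, 1 ≤ j → j ≤ n - 1 →
      block e j = block u j ∨ ∃ m, block e j = (block u j).eraseIdx m := by
    have hbs1 : ∀ w : List ℕ, blockStart w 1 = 0 := fun w => if_pos rfl
    intro j h1 h2
    have hjn : j ≤ n := by omega
    have hsujl := hsu j h1 hjn
    by_cases hj1 : j = 1
    · subst hj1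
      have hpne1 := hpne 1 le_rfl (by omega)
      by_cases hc : p < secondOcc u 1
      · right
        refine ⟨p, ?_⟩
        simp only [block, hbs1, drop_zero]
        rw [hse 1 le_rfl (by omega), if_pos hc]
        have := slice_eraseIdx_inside (l := u) (p := p) (s := 0) (t := secondOcc u 1)
          (by omega) hc (by omega)
        simp only [drop_zero, Nat.sub_zero] at this
        rw [← he_def] at this
        exact this
      · left
        have hlt : secondOcc u 1 < p := by omega
        simp only [block, hbs1, drop_zero]
        rw [hse 1 le_rfl (by omega), if_neg hc, he_def]
        exact take_eraseIdx_of_le (by omega) hp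
    · have hbs2 : ∀ w : List ℕ, blockStart w j = secondOcc w (j - 1) + 1 :=
        fun w => if_neg hj1
      have hj2 : 2 ≤ j := by omega
      have h1j : 1 ≤ j - 1 := by omega
      have hj1n : j - 1 ≤ n := by omega
      have hsj1j : secondOcc u (j - 1) < secondOcc u j := h6 j hj2 hjn
      have hpnej := hpne j h1 hjn
      have hpnej1 := hpne (j - 1) h1j hj1n
      rcases lt_trichotomy p (secondOcc u (j - 1)) with hc3 | hc | hc
      · -- p before the whole block: block shifts
        left
        simp only [block, hbs2]
        rw [hse j h1 hjn, if_pos (by omega), hse (j - 1) h1j hj1n, if_pos hc3]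
        rw [drop_take, drop_take,
          show secondOcc u (j - 1) - 1 + 1 = secondOcc u (j - 1) from by omega,
          he_def, drop_eraseIdx_of_ge (show p ≤ secondOcc u (j - 1) by omega) hp]
        congr 1
        omega
      · exact absurd hc hpnej1
      · by_cases hc1 : secondOcc u j < p
        · -- p after the whole block: block unchanged
          left
          simp only [block, hbs2]
          rw [hse j h1 hjn, if_neg (by omega), hse (j - 1) h1j hj1n, if_neg (by omega),
            he_def, take_eraseIdx_of_le (le_of_lt hc1) hp]
        · -- p inside the block
          have hc2 : p < secondOcc u j := by omega
          right
          refine ⟨p - (secondOcc u (j - 1) + 1), ?_⟩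
          simp only [block, hbs2]
          rw [hse j h1 hjn, if_pos hc2, hse (j - 1) h1j hj1n, if_neg (by omega), he_def]
          exact slice_eraseIdx_inside (by omega) hc2 (by omega)
  -- Step 2: blocks of u' vs blocks of e
  have keyB1 : ∀ j, 1 ≤ j → j ≤ n - 1 →
      (k ≤ secondOcc e j ∧ (j = 1 ∨ secondOcc e (j - 1) < k)) →
      ∃ m, block (e.insertIdx k i) j = (block e j).insertIdx m i := by
    have hbs1 : ∀ w : List ℕ, blockStart w 1 = 0 := fun w => if_pos rfl
    rintro j h1 h2 ⟨hC1, hC2⟩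
    have hjn : j ≤ n := by omega
    have hsejl := hsel j h1 hjn
    by_cases hj1 : j = 1
    · subst hj1
      refine ⟨k, ?_⟩
      simp only [block, hbs1, drop_zero]
      rw [hs' 1 le_rfl (by omega), if_pos hC1]
      have := slice_insertIdx_inside (l := e) (k := k) (s := 0) (t := secondOcc e 1)
        (by omega) hC1 (by omega) i
      simp only [drop_zero, Nat.sub_zero] at this
      exact this
    · have hbs2 : ∀ w : List ℕ, blockStart w j = secondOcc w (j - 1) + 1 :=
        fun w => if_neg hj1
      have hj2 : 2 ≤ j := by omega
      have hC2' : secondOcc e (j - 1) < k := by tauto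
      refine ⟨k - (secondOcc e (j - 1) + 1), ?_⟩
      simp only [block, hbs2]
      rw [hs' j h1 hjn, if_pos hC1, hs' (j - 1) (by omega) (by omega), if_neg (by omega)]
      exact slice_insertIdx_inside (by omega) hC1 (by omega) i
  have keyB2 : ∀ j, 1 ≤ j → j ≤ n - 1 →
      ¬(k ≤ secondOcc e j ∧ (j = 1 ∨ secondOcc e (j - 1) < k)) →
      block (e.insertIdx k i) j = block e j := by
    have hbs1 : ∀ w : List ℕ, blockStart w 1 = 0 := fun w => if_pos rfl
    intro j h1 h2 hC
    have hjn : j ≤ n := by omega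
    have hsejl := hsel j h1 hjn
    by_cases hkj : k ≤ secondOcc e j
    · -- then j ≥ 2 and k ≤ secondOcc e (j-1)
      have hj1 : j ≠ 1 := by
        intro hj; exact hC ⟨hkj, Or.inl hj⟩
      have hbs2 : ∀ w : List ℕ, blockStart w j = secondOcc w (j - 1) + 1 :=
        fun w => if_neg hj1
      have hkj1 : k ≤ secondOcc e (j - 1) := by
        rcases Nat.lt_or_ge (secondOcc e (j - 1)) k with hlt | hge
        · exact absurd ⟨hkj, Or.inr hlt⟩ hC
        · exact hge
      have hj2 : 2 ≤ j := by omega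
      have hsej1j : secondOcc e (j - 1) < secondOcc e j :=
        hsemono (j - 1) j (by omega) (by omega) hjn
      simp only [block, hbs2]
      rw [hs' j h1 hjn, if_pos hkj, hs' (j - 1) (by omega) (by omega), if_pos hkj1]
      rw [drop_take, drop_take,
        drop_insertIdx_of_ge (show k ≤ secondOcc e (j - 1) + 1 by omega) (by omega)
          (by omega) i]
      congr 1
      omega
    · -- k after the block: unchanged
      have hkj' : secondOcc e j < k := by omega
      by_cases hj1 : j = 1
      · subst hj1
        simp only [block, hbs1, drop_zero]
        rw [hs' 1 le_rfl (by omega), if_neg hkj]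
        rw [take_insertIdx_of_le (by omega) (by omega) i]
      · have hbs2 : ∀ w : List ℕ, blockStart w j = secondOcc w (j - 1) + 1 :=
          fun w => if_neg hj1
        have hj2 : 2 ≤ j := by omega
        have hsej1j : secondOcc e (j - 1) < secondOcc e j :=
          hsemono (j - 1) j (by omega) (by omega) hjn
        simp only [block, hbs2]
        rw [hs' j h1 hjn, if_neg hkj, hs' (j - 1) (by omega) (by omega),
          if_neg (by omega)]
        rw [take_insertIdx_of_le (by omega) (by omega) i]
  -- Put everything together
  subst hu'
  have hgoal : sim n ((u.erase i).insertIdx k i) v = sim n (e.insertIdx k i) v := by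
    rw [herase]
  rw [hgoal]
  have key : ∀ j ∈ Finset.Icc 1 (n - 1),
      lcsLen (block (e.insertIdx k i) j) (block v j) ≤
        lcsLen (block u j) (block v j) +
          (if k ≤ secondOcc e j ∧ (j = 1 ∨ secondOcc e (j - 1) < k) then 1 else 0) := by
    intro j hj
    rw [Finset.mem_Icc] at hj
    obtain ⟨h1, h2⟩ := hj
    have hsub : (block e j).Sublist (block u j) := by
      rcases keyA j h1 h2 with heq | ⟨m, hm⟩
      · rw [heq]
      · rw [hm]; exact eraseIdx_sublist _ _
    by_cases hC : k ≤ secondOcc e j ∧ (j = 1 ∨ secondOcc e (j - 1) < k)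
    · rw [if_pos hC]
      obtain ⟨m, hm⟩ := keyB1 j h1 h2 hC
      rw [hm]
      exact le_trans (lcsLen_insertIdx_le _ _ _ _)
        (Nat.add_le_add_right (lcsLen_mono hsub) 1)
    · rw [if_neg hC, keyB2 j h1 h2 hC, Nat.add_zero]
      exact lcsLen_mono hsub
  calc sim n (e.insertIdx k i) v
      ≤ ∑ j ∈ Finset.Icc 1 (n - 1), (lcsLen (block u j) (block v j) +
          (if k ≤ secondOcc e j ∧ (j = 1 ∨ secondOcc e (j - 1) < k) then 1 else 0)) :=
        Finset.sum_le_sum key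
    _ = sim n u v + ∑ j ∈ Finset.Icc 1 (n - 1),
          (if k ≤ secondOcc e j ∧ (j = 1 ∨ secondOcc e (j - 1) < k) then 1 else 0) := by
        rw [Finset.sum_add_distrib]; rfl
    _ ≤ sim n u v + 1 := by
        apply Nat.add_le_add_left
        classical
        rw [← Finset.sum_filter, Finset.sum_const, smul_eq_mul, mul_one]
        rw [Finset.card_le_one]
        intro a ha b hb
        simp only [Finset.mem_filter, Finset.mem_Icc] at ha hb
        obtain ⟨⟨ha1, ha2⟩, hka, hCa⟩ := ha
        obtain ⟨⟨hb1, hb2⟩, hkb, hCb⟩ := hb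
        have key2 : ∀ x y, 1 ≤ x → x < y → y ≤ n - 1 → k ≤ secondOcc e x →
            (y = 1 ∨ secondOcc e (y - 1) < k) → False := by
          intro x y hx hxy hy hkx hCy
          rcases hCy with hy1 | hlt
          · omega
          · have hle : secondOcc e x ≤ secondOcc e (y - 1) := by
              rcases Nat.eq_or_lt_of_le (show x ≤ y - 1 by omega) with heq | hlt2
              · rw [heq]
              · exact le_of_lt (hsemono x (y - 1) hx hlt2 (by omega))
            omega
        rcases lt_trichotomy a b with hab | hab | hab
        · exact absurd (key2 a b ha1 hab hb2 hka hCb) not_false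
        · exact hab
        · exact absurd (key2 b a hb1 hab ha2 hkb hCa) not_false
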